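/- The k-ray P_{k∞} (k rays glued at a common endpoint) is self-embeddable if and only if k = 1. Consequently, a (P_{k∞}, K₂)-minimal graph exists if and only if k > 1. -/

import Mathlib

open SimpleGraph

/-- `G` embeds into `H`: an injective graph homomorphism (not necessarily induced). -/
def EmbedsIn {α β : Type*} (G : SimpleGraph α) (H : SimpleGraph β) : Prop :=
  ∃ f : G →g H, Function.Injective f

/-- `G` is self-embeddable: it admits an injective adjacency-preserving self-map whose
image, as a subgraph, is a proper subgraph (strictly smaller edge set). -/
def SelfEmbeddable {α : Type*} (G : SimpleGraph α) : Prop :=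
  ∃ f : G →g G, Function.Injective f ∧ Sym2.map f '' G.edgeSet ⊂ G.edgeSet

/-- `G` is strongly self-embeddable: `G` embeds into `G - v` for every vertex `v`. -/
def StronglySelfEmbeddable {α : Type*} (G : SimpleGraph α) : Prop :=
  ∀ v : α, EmbedsIn G (G.induce ({v}ᶜ : Set α))

/-- The subgraph of `F` consisting of the edges with color `b` under coloring `c`. -/
def colorSubgraph {α : Type*} (F : SimpleGraph α) (c : Sym2 α → Bool) (b : Bool) :
    SimpleGraph α where
  Adj x y := F.Adj x y ∧ c s(x, y) = b
  symm := ⟨by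
    intro x y h
    exact ⟨h.1.symm, by rw [Sym2.eq_swap]; exact h.2⟩⟩
  loopless := ⟨by intro x h; exact F.irrefl h.1⟩

/-- `F → (G, H)` : every red-blue coloring of the edges of `F` yields a red copy of `G`
or a blue copy of `H` (here `true` = red, `false` = blue). -/
def Arrows {α β γ : Type*} (F : SimpleGraph α) (G : SimpleGraph β) (H : SimpleGraph γ) : Prop :=
  ∀ c : Sym2 α → Bool,
    EmbedsIn G (colorSubgraph F c true) ∨ EmbedsIn H (colorSubgraph F c false)

/-- `F` is `(G,H)`-minimal: it arrows `(G,H)` but no proper subgraph of it does. -/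
def RamseyMinimal {α β γ : Type*} (F : SimpleGraph α) (G : SimpleGraph β)
    (H : SimpleGraph γ) : Prop :=
  Arrows F G H ∧ ∀ F' : SimpleGraph α, F' < F → ¬ Arrows F' G H

/-- `G` has no isolated vertices. -/
def NoIsolated {α : Type*} (G : SimpleGraph α) : Prop := ∀ v, ∃ w, G.Adj v w

/-- The single-edge graph `K₂`. -/
def K2 : SimpleGraph (Fin 2) := ⊤

/-- The matching `nK₂` with `n` pairwise disjoint edges. -/
def Matching (n : ℕ) : SimpleGraph (Fin n × Fin 2) where
  Adj a b := a.1 = b.1 ∧ a.2 ≠ b.2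
  symm := ⟨by intro a b h; exact ⟨h.1.symm, h.2.symm⟩⟩
  loopless := ⟨by intro a h; exact h.2 rfl⟩

/-- The disjoint union `nG` of `n` copies of `G`. -/
def nCopies {V : Type*} (n : ℕ) (G : SimpleGraph V) : SimpleGraph (Fin n × V) where
  Adj a b := a.1 = b.1 ∧ G.Adj a.2 b.2
  symm := ⟨by intro a b h; exact ⟨h.1.symm, h.2.symm⟩⟩
  loopless := ⟨by intro a h; exact G.irrefl h.2⟩

/-- The infinite star `S_∞ = K_{1,∞}`, with center `none`. -/
def InfStar : SimpleGraph (Option ℕ) := SimpleGraph.fromRel (fun a _ => a = none)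

/-- The finite star `K_{1,n}`, with center `none`. -/
def StarN (n : ℕ) : SimpleGraph (Option (Fin n)) := SimpleGraph.fromRel (fun a _ => a = none)

/-- The ray `P_∞` (one-way infinite path) on `ℕ`. -/
def Ray : SimpleGraph ℕ := SimpleGraph.fromRel (fun a b => b = a + 1)

/-- The `k`-ray `P_{k∞}`: `k` rays glued at a common endpoint `none`. -/
def kRay (k : ℕ) : SimpleGraph (Option (Fin k × ℕ)) :=
  SimpleGraph.fromRel (fun a b =>
    (a = none ∧ ∃ i, b = some (i, 0)) ∨ (∃ i n, a = some (i, n) ∧ b = some (i, n + 1)))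
section Aux
variable {k : ℕ}

lemma kadj_none_some {i : Fin k} {n : ℕ} : (kRay k).Adj none (some (i, n)) ↔ n = 0 := by
  simp [kRay, SimpleGraph.fromRel_adj]

lemma kadj_some_some {i j : Fin k} {m n : ℕ} :
    (kRay k).Adj (some (i, m)) (some (j, n)) ↔ i = j ∧ (n = m + 1 ∨ m = n + 1) := by
  constructor
  · rintro ⟨hne, ((⟨h,-⟩|⟨i',n',h1,h2⟩)|(⟨h,-⟩|⟨i',n',h1,h2⟩))⟩
    · exact absurd h (by simp)
    · rw [Option.some_inj, Prod.mk.injEq] at h1 h2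
      exact ⟨h1.1.trans h2.1.symm, Or.inl (by omega)⟩
    · exact absurd h (by simp)
    · rw [Option.some_inj, Prod.mk.injEq] at h1 h2
      exact ⟨h2.1.trans h1.1.symm, Or.inr (by omega)⟩
  · rintro ⟨rfl, (rfl | rfl)⟩
    · exact ⟨by simp, Or.inl (Or.inr ⟨i, m, rfl, rfl⟩)⟩
    · exact ⟨by simp, Or.inr (Or.inr ⟨i, n, rfl, rfl⟩)⟩

lemma kadj_some_none {i : Fin k} {n : ℕ} : (kRay k).Adj (some (i, n)) none ↔ n = 0 := by
  rw [SimpleGraph.adj_comm]; exact kadj_none_some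

/-- predecessor of a ray vertex -/
def kprev (i : Fin k) : ℕ → Option (Fin k × ℕ)
  | 0 => none
  | (m+1) => some (i, m)

/-- every neighbor of a `some` vertex is its successor or its predecessor -/
lemma kadj_some {i : Fin k} {n : ℕ} {b : Option (Fin k × ℕ)}
    (h : (kRay k).Adj (some (i, n)) b) :
    b = some (i, n + 1) ∨ b = kprev i n := by
  match b with
  | none => right; rw [kadj_some_none] at h; subst h; rfl
  | some (j, m) =>
    rw [kadj_some_some] at h
    obtain ⟨rfl, h | h⟩ := h
    · left; rw [h]
    · right; subst h; rfl

end Aux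
lemma image_edgeSet_subset {α β : Type*} {G : SimpleGraph α} {H : SimpleGraph β}
    (f : G →g H) : Sym2.map f '' G.edgeSet ⊆ H.edgeSet := by
  rintro e ⟨e', he', rfl⟩
  exact SimpleGraph.Hom.map_mem_edgeSet f he'

lemma not_selfEmbeddable_of_three {k : ℕ} (hk : 3 ≤ k) : ¬ SelfEmbeddable (kRay k) := by
  rintro ⟨f, hinj, hss⟩
  -- Step 1: f fixes the center
  have hcenter : f none = none := by
    by_contra hne
    obtain ⟨⟨i, n⟩, hin⟩ : ∃ p, f none = some p := Option.ne_none_iff_exists'.mp hne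
    have key : ∀ j : Fin k, f (some (j, 0)) = some (i, n + 1) ∨ f (some (j, 0)) = kprev i n := by
      intro j
      apply kadj_some
      rw [← hin]
      exact f.map_rel (kadj_none_some.mpr rfl)
    have hd : ∀ j j' : Fin k, f (some (j, 0)) = f (some (j', 0)) → j = j' := by
      intro j j' h
      have := hinj h
      simpa using this
    have h0 := key ⟨0, by omega⟩
    have h1 := key ⟨1, by omega⟩
    have h2 := key ⟨2, by omega⟩
    rcases h0 with h0 | h0 <;> rcases h1 with h1 | h1 <;> rcases h2 with h2 | h2 <;>
      first
      | exact absurd (hd _ _ (h0.trans h1.symm)) (by simp [Fin.ext_iff])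
      | exact absurd (hd _ _ (h0.trans h2.symm)) (by simp [Fin.ext_iff])
      | exact absurd (hd _ _ (h1.trans h2.symm)) (by simp [Fin.ext_iff])
  -- Step 2: each ray maps into a ray
  have hray : ∀ i : Fin k, ∃ j : Fin k, ∀ n, f (some (i, n)) = some (j, n) := by
    intro i
    have h0 : (kRay k).Adj (f none) (f (some (i, 0))) := f.map_rel (kadj_none_some.mpr rfl)
    rw [hcenter] at h0
    obtain ⟨p, hp⟩ : ∃ p, f (some (i, 0)) = some p := by
      cases hfi : f (some (i, 0)) with
      | none => rw [hfi] at h0; exact absurd h0 (kRay k).irrefl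
      | some p => exact ⟨p, rfl⟩
    obtain ⟨j, m⟩ := p
    rw [hp] at h0
    have hm : m = 0 := kadj_none_some.mp h0
    subst hm
    refine ⟨j, ?_⟩
    have main : ∀ n, f (some (i, n)) = some (j, n) ∧ f (some (i, n + 1)) = some (j, n + 1) := by
      intro n
      induction n with
      | zero =>
        refine ⟨hp, ?_⟩
        have hadj : (kRay k).Adj (f (some (i, 0))) (f (some (i, 1))) :=
          f.map_rel (kadj_some_some.mpr ⟨rfl, Or.inl rfl⟩)
        rw [hp] at hadj
        rcases kadj_some hadj with h | h
        · exact h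
        · exfalso
          have := hinj (h.trans hcenter.symm)
          simp at this
      | succ n ih =>
        refine ⟨ih.2, ?_⟩
        have hadj : (kRay k).Adj (f (some (i, n + 1))) (f (some (i, n + 2))) :=
          f.map_rel (kadj_some_some.mpr ⟨rfl, Or.inl rfl⟩)
        rw [ih.2] at hadj
        rcases kadj_some hadj with h | h
        · exact h
        · exfalso
          have := hinj (h.trans ih.1.symm)
          simp at this
    exact fun n => (main n).1
  choose σ hσ using hray
  have hσinj : Function.Injective σ := by
    intro a b hab
    have h1 : f (some (a, 0)) = f (some (b, 0)) := by rw [hσ a 0, hσ b 0, hab]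
    have := hinj h1
    simpa using this
  have hσsurj : Function.Surjective σ := Finite.injective_iff_surjective.mp hσinj
  -- Step 3: edgeSet is covered
  apply hss.2
  intro e he
  induction e with
  | h x y =>
    rw [SimpleGraph.mem_edgeSet] at he
    match x, y with
    | none, none => exact absurd he (kRay k).irrefl
    | none, some (j, m) =>
      have hm : m = 0 := kadj_none_some.mp he
      subst hm
      obtain ⟨i, rfl⟩ := hσsurj j
      refine ⟨s(none, some (i, 0)), kadj_none_some.mpr rfl, ?_⟩
      rw [Sym2.map_pair_eq, hcenter, hσ]
    | some (j, m), none =>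
      have hm : m = 0 := kadj_some_none.mp he
      subst hm
      obtain ⟨i, rfl⟩ := hσsurj j
      refine ⟨s(some (i, 0), none), kadj_some_none.mpr rfl, ?_⟩
      rw [Sym2.map_pair_eq, hcenter, hσ]
    | some (j, m), some (j', n) =>
      obtain ⟨rfl, hmn⟩ := kadj_some_some.mp he
      obtain ⟨i, rfl⟩ := hσsurj j
      refine ⟨s(some (i, m), some (i, n)), kadj_some_some.mpr ⟨rfl, hmn⟩, ?_⟩
      rw [Sym2.map_pair_eq, hσ, hσ]
def vz : Option (Fin 2 × ℕ) → ℤ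
  | none => 0
  | some (i, n) => if i = 0 then (n : ℤ) + 1 else -((n : ℤ) + 1)

def zv (z : ℤ) : Option (Fin 2 × ℕ) :=
  if z = 0 then none else if 0 < z then some (0, (z - 1).toNat) else some (1, (-z - 1).toNat)

lemma vz_none : vz none = 0 := rfl
lemma vz_zero (n : ℕ) : vz (some (0, n)) = (n : ℤ) + 1 := rfl
lemma vz_one (n : ℕ) : vz (some (1, n)) = -((n : ℤ) + 1) := rfl

lemma zv_zero : zv 0 = none := rfl
lemma zv_pos {z : ℤ} (h : 0 < z) : zv z = some (0, (z - 1).toNat) := by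
  unfold zv; rw [if_neg (by omega), if_pos h]
lemma zv_neg {z : ℤ} (h : z < 0) : zv z = some (1, (-z - 1).toNat) := by
  unfold zv; rw [if_neg (by omega), if_neg (by omega)]

lemma vz_zv (z : ℤ) : vz (zv z) = z := by
  rcases lt_trichotomy z 0 with h | rfl | h
  · rw [zv_neg h, vz_one]; omega
  · rfl
  · rw [zv_pos h, vz_zero]; omega

lemma zv_vz (a : Option (Fin 2 × ℕ)) : zv (vz a) = a := by
  match a with
  | none => rfl
  | some (i, n) =>
    fin_cases i <;> simp only [Fin.zero_eta, Fin.mk_one]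
    · rw [vz_zero, zv_pos (by omega)]
      simp only [Option.some_inj, Prod.mk.injEq, true_and]
      omega
    · rw [vz_one, zv_neg (by omega)]
      simp only [Option.some_inj, Prod.mk.injEq, true_and]
      omega

lemma vz_inj {a b : Option (Fin 2 × ℕ)} (h : vz a = vz b) : a = b := by
  rw [← zv_vz a, ← zv_vz b, h]

lemma adj_iff_vz {a b : Option (Fin 2 × ℕ)} :
    (kRay 2).Adj a b ↔ (vz a = vz b + 1 ∨ vz b = vz a + 1) := by
  match a, b with
  | none, none =>
    rw [vz_none]
    constructor
    · intro h; exact absurd h (kRay 2).irrefl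
    · intro h; omega
  | none, some (i, n) =>
    rw [kadj_none_some, vz_none]
    fin_cases i <;> simp only [Fin.zero_eta, Fin.mk_one]
    · rw [vz_zero]; omega
    · rw [vz_one]; omega
  | some (i, n), none =>
    rw [kadj_some_none, vz_none]
    fin_cases i <;> simp only [Fin.zero_eta, Fin.mk_one]
    · rw [vz_zero]; omega
    · rw [vz_one]; omega
  | some (i, m), some (j, n) =>
    rw [kadj_some_some]
    fin_cases i <;> fin_cases j <;> simp only [Fin.zero_eta, Fin.mk_one]
    · rw [vz_zero, vz_zero]
      simp only [true_and]
      constructor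
      · rintro h; omega
      · intro h; omega
    · rw [vz_zero, vz_one]
      constructor
      · rintro ⟨h, -⟩; exact absurd h (by decide)
      · intro h; omega
    · rw [vz_one, vz_zero]
      constructor
      · rintro ⟨h, -⟩; exact absurd h (by decide)
      · intro h; omega
    · rw [vz_one, vz_one]
      simp only [true_and]
      constructor
      · rintro h; omega
      · intro h; omega
lemma not_selfEmbeddable_two : ¬ SelfEmbeddable (kRay 2) := by
  rintro ⟨f, hinj, hss⟩
  set g : ℤ → ℤ := fun z => vz (f (zv z)) with hg
  have hginj : Function.Injective g := by
    intro a b hab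
    have h1 : f (zv a) = f (zv b) := vz_inj hab
    have h2 := hinj h1
    have h3 := congrArg vz h2
    rwa [vz_zv, vz_zv] at h3
  have hstep : ∀ z : ℤ, g (z + 1) = g z + 1 ∨ g z = g (z + 1) + 1 := by
    intro z
    have hadj : (kRay 2).Adj (zv z) (zv (z + 1)) :=
      adj_iff_vz.mpr (Or.inr (by rw [vz_zv, vz_zv]))
    rcases adj_iff_vz.mp (f.map_rel hadj) with h | h
    · right; exact h
    · left; exact h
  have key : ∀ z : ℤ, g (z + 1 + 1) - g (z + 1) = g (z + 1) - g z := by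
    intro z
    rcases hstep z with h1 | h1 <;> rcases hstep (z + 1) with h2 | h2
    · linarith
    · exfalso
      have he : g (z + 1 + 1) = g z := by linarith
      have := hginj he
      omega
    · exfalso
      have he : g (z + 1 + 1) = g z := by linarith
      have := hginj he
      omega
    · linarith
  have hd : ∀ z : ℤ, g (z + 1) - g z = g 1 - g 0 := by
    intro z
    induction z using Int.induction_on with
    | zero => norm_num
    | succ n ih => rw [key n]; exact ih
    | pred n ih =>
      have h := key (-(n : ℤ) - 1)
      rw [show -(n : ℤ) - 1 + 1 = -n by ring] at h ⊢
      linarith [ih, h]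
  set c : ℤ := g 1 - g 0 with hc0
  have hc : c = 1 ∨ c = -1 := by
    have h := hstep 0
    norm_num at h
    omega
  have hlin : ∀ z : ℤ, g z = g 0 + c * z := by
    intro z
    induction z using Int.induction_on with
    | zero => ring
    | succ n ih =>
      have h := hd n
      have : g ((n : ℤ) + 1) = g n + c := by linarith
      rw [this, ih]; ring
    | pred n ih =>
      have h := hd (-(n : ℤ) - 1)
      rw [show -(n : ℤ) - 1 + 1 = -n by ring] at h
      have : g (-(n : ℤ) - 1) = g (-(n : ℤ)) - c := by linarith
      rw [this, ih]; ring
  have hsurj : ∀ w : ℤ, ∃ z : ℤ, g z = w := by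
    intro w
    refine ⟨c * (w - g 0), ?_⟩
    rw [hlin]
    rcases hc with h | h <;> rw [h] <;> ring
  -- every edge is covered
  have hedge1 : ∀ u v : Option (Fin 2 × ℕ), vz v = vz u + 1 →
      ∃ x y : Option (Fin 2 × ℕ), (kRay 2).Adj x y ∧ f x = u ∧ f y = v := by
    intro u v huv
    rcases hc with h | h
    · obtain ⟨z, hz⟩ := hsurj (vz u)
      have hz1 : g (z + 1) = vz v := by have := hd z; omega
      refine ⟨zv z, zv (z + 1), adj_iff_vz.mpr (Or.inr (by rw [vz_zv, vz_zv])), ?_, ?_⟩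
      · exact vz_inj hz
      · exact vz_inj hz1
    · obtain ⟨z, hz⟩ := hsurj (vz v)
      have hz1 : g (z + 1) = vz u := by have := hd z; omega
      refine ⟨zv (z + 1), zv z, (adj_iff_vz.mpr (Or.inr (by rw [vz_zv, vz_zv]))).symm, ?_, ?_⟩
      · exact vz_inj hz1
      · exact vz_inj hz
  apply hss.2
  intro e he
  induction e with
  | h x y =>
    rw [SimpleGraph.mem_edgeSet] at he
    rcases adj_iff_vz.mp he with h | h
    · obtain ⟨a, b, hab, ha, hb⟩ := hedge1 y x h
      exact ⟨s(a, b), (SimpleGraph.mem_edgeSet _).mpr hab, by rw [Sym2.map_pair_eq, ha, hb, Sym2.eq_swap]⟩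
    · obtain ⟨a, b, hab, ha, hb⟩ := hedge1 x y h
      exact ⟨s(a, b), (SimpleGraph.mem_edgeSet _).mpr hab, by rw [Sym2.map_pair_eq, ha, hb]⟩
def shiftMap : Option (Fin 1 × ℕ) → Option (Fin 1 × ℕ)
  | none => some (0, 0)
  | some (i, n) => some (i, n + 1)

lemma shiftMap_ne_none (a : Option (Fin 1 × ℕ)) : shiftMap a ≠ none := by
  match a with
  | none => exact fun h => Option.some_ne_none _ h
  | some (i, n) => exact fun h => Option.some_ne_none _ h

lemma selfEmbeddable_one : SelfEmbeddable (kRay 1) := by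
  have hmap : ∀ {a b}, (kRay 1).Adj a b → (kRay 1).Adj (shiftMap a) (shiftMap b) := by
    intro a b hab
    match a, b with
    | none, none => exact absurd hab (kRay 1).irrefl
    | none, some (i, n) =>
      have hn : n = 0 := kadj_none_some.mp hab
      subst hn
      show (kRay 1).Adj (some (0, 0)) (some (i, 1))
      have : i = 0 := Subsingleton.elim i 0
      subst this
      exact kadj_some_some.mpr ⟨rfl, Or.inl rfl⟩
    | some (i, n), none =>
      have hn : n = 0 := kadj_some_none.mp hab
      subst hn
      have : i = 0 := Subsingleton.elim i 0
      subst this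
      exact (kadj_some_some.mpr ⟨rfl, Or.inl rfl⟩).symm
    | some (i, m), some (j, n) =>
      obtain ⟨rfl, h⟩ := kadj_some_some.mp hab
      exact kadj_some_some.mpr ⟨rfl, by omega⟩
  refine ⟨⟨shiftMap, hmap⟩, ?_, ?_, ?_⟩
  · intro a b hab
    match a, b with
    | none, none => rfl
    | none, some (i, n) =>
      exfalso
      have h2 : some ((0 : Fin 1), 0) = some (i, n + 1) := hab
      simp [Prod.ext_iff] at h2
    | some (i, n), none =>
      exfalso
      have h2 : some (i, n + 1) = some ((0 : Fin 1), 0) := hab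
      simp [Prod.ext_iff] at h2
    | some (i, m), some (j, n) =>
      have h2 : some (i, m + 1) = some (j, n + 1) := hab
      simp only [Option.some_inj, Prod.mk.injEq] at h2
      obtain ⟨rfl, h3⟩ := h2
      simp only [Option.some_inj, Prod.mk.injEq, true_and]
      omega
  · exact image_edgeSet_subset _
  · intro hsub
    have hmem : s(none, some ((0 : Fin 1), 0)) ∈ (kRay 1).edgeSet :=
      (SimpleGraph.mem_edgeSet _).mpr (kadj_none_some.mpr rfl)
    obtain ⟨e', he', heq⟩ := hsub hmem
    revert he' heq
    refine Sym2.ind (fun x y he' heq => ?_) e'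
    rw [Sym2.map_pair_eq] at heq
    rcases Sym2.eq_iff.mp heq with ⟨h1, -⟩ | ⟨-, h2⟩
    · exact shiftMap_ne_none x h1
    · exact shiftMap_ne_none y h2

lemma arrows_K2_iff {α β : Type*} (F : SimpleGraph α) (G : SimpleGraph β) :
    Arrows F G K2 ↔ EmbedsIn G F := by
  constructor
  · intro h
    rcases h (fun _ => true) with ⟨f, hf⟩ | ⟨f, hf⟩
    · exact ⟨⟨f, fun hadj => (f.map_rel hadj).1⟩, hf⟩
    · exfalso
      have h01 : K2.Adj 0 1 := by
        show (⊤ : SimpleGraph (Fin 2)).Adj 0 1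
        simp
      have : (colorSubgraph F (fun _ => true) false).Adj (f 0) (f 1) := f.map_rel h01
      exact absurd this.2 (by simp)
  · rintro ⟨f, hf⟩ c
    by_cases hblue : ∃ x y, F.Adj x y ∧ c s(x, y) = false
    · right
      obtain ⟨x, y, hxy, hc⟩ := hblue
      refine ⟨⟨fun i => if i = 0 then x else y, ?_⟩, ?_⟩
      · intro a b hab
        have hne : a ≠ b := hab
        fin_cases a <;> fin_cases b
        · exact absurd rfl hne
        · exact ⟨hxy, hc⟩
        · exact ⟨hxy.symm, by rw [Sym2.eq_swap]; exact hc⟩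
        · exact absurd rfl hne
      · intro a b hab
        fin_cases a <;> fin_cases b
        · rfl
        · exact absurd hab hxy.ne
        · exact absurd hab hxy.ne'
        · rfl
    · left
      push_neg at hblue
      refine ⟨⟨f, fun {a b} hadj => ⟨f.map_rel hadj, ?_⟩⟩, hf⟩
      have := hblue (f a) (f b) (f.map_rel hadj)
      simpa using this
/-- The `k`-ray is self-embeddable iff `k = 1`; consequently, a `(P_{k∞}, K₂)`-minimal
graph exists iff `k > 1`. -/
theorem stmt11 (k : ℕ) (hk : 1 ≤ k) :
    (SelfEmbeddable (kRay k) ↔ k = 1) ∧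
    ((∃ (W : Type) (F : SimpleGraph W), RamseyMinimal F (kRay k) K2) ↔ 1 < k) := by
  have hnse : k ≠ 1 → ¬ SelfEmbeddable (kRay k) := by
    intro h
    rcases Nat.lt_or_ge k 3 with h3 | h3
    · have h2 : k = 2 := by omega
      subst h2
      exact not_selfEmbeddable_two
    · exact not_selfEmbeddable_of_three h3
  have hiff1 : SelfEmbeddable (kRay k) ↔ k = 1 := by
    constructor
    · intro hse
      by_contra h
      exact hnse h hse
    · rintro rfl
      exact selfEmbeddable_one
  refine ⟨hiff1, ?_, ?_⟩
  · rintro ⟨W, F, hArr, hmin⟩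
    by_contra hlt
    have hk1 : k = 1 := by omega
    subst hk1
    obtain ⟨f, hfinj⟩ := (arrows_K2_iff _ _).mp hArr
    obtain ⟨g, hginj, hss⟩ := selfEmbeddable_one
    obtain ⟨e₀, he₀, hne₀⟩ := Set.exists_of_ssubset hss
    have hfe₀ : Sym2.map f e₀ ∈ F.edgeSet := SimpleGraph.Hom.map_mem_edgeSet f he₀
    set F' : SimpleGraph W := F.deleteEdges {Sym2.map f e₀} with hF'
    have hltF : F' < F := by
      refine lt_of_le_of_ne (SimpleGraph.deleteEdges_le _) ?_
      intro h
      have hmem : Sym2.map f e₀ ∈ F'.edgeSet := by rw [h]; exact hfe₀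
      rw [hF', SimpleGraph.edgeSet_deleteEdges] at hmem
      exact hmem.2 rfl
    apply hmin F' hltF
    rw [arrows_K2_iff]
    refine ⟨⟨fun a => f (g a), ?_⟩, hfinj.comp hginj⟩
    intro a b hab
    rw [hF', SimpleGraph.deleteEdges_adj]
    refine ⟨f.map_rel (g.map_rel hab), ?_⟩
    intro hin
    rw [Set.mem_singleton_iff] at hin
    have hmapinj : Function.Injective (Sym2.map f) := Sym2.map.injective hfinj
    have h1 : Sym2.map f s(g a, g b) = Sym2.map f e₀ := by
      rw [Sym2.map_pair_eq]; exact hin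
    have h2 : s(g a, g b) = e₀ := hmapinj h1
    apply hne₀
    rw [← h2]
    exact ⟨s(a, b), (SimpleGraph.mem_edgeSet _).mpr hab, by rw [Sym2.map_pair_eq]⟩
  · intro hk2
    refine ⟨Option (Fin k × ℕ), kRay k, ?_, ?_⟩
    · exact (arrows_K2_iff _ _).mpr ⟨SimpleGraph.Hom.id, Function.injective_id⟩
    · intro F' hlt hA
      obtain ⟨f, hfinj⟩ := (arrows_K2_iff _ _).mp hA
      have hse : SelfEmbeddable (kRay k) := by
        refine ⟨⟨f, fun {a b} h => hlt.le (f.map_rel h)⟩, hfinj, ?_, ?_⟩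
        · exact image_edgeSet_subset _
        · intro hsub
          obtain ⟨e₀, he₀, hne₀⟩ :=
            Set.exists_of_ssubset ((SimpleGraph.edgeSet_ssubset_edgeSet).mpr hlt)
          have himg : Sym2.map f '' (kRay k).edgeSet ⊆ F'.edgeSet := image_edgeSet_subset f
          exact hne₀ (himg (hsub he₀))
      exact hnse (by omega) hse
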